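/- Let P be a finite-dimensional φ-free Poisson algebra (φ(P) = 0). Then Zsoc(P) = N(P) = Ann_P(Soc(P)), where Zsoc(P) is the sum of the minimal zero ideals, N(P) is the nilradical, and Soc(P) is the sum of all minimal ideals. -/
import Mathlib


/-!  Framework: dialgebras and Poisson algebras as bilinear structures on a module. -/

variable {F P : Type*} [Field F] [AddCommGroup P] [Module F P]

/-- A dialgebra: a vector space with two bilinear multiplications. -/
structure Dialgebra (F P : Type*) [Field F] [AddCommGroup P] [Module F P] where
  mul : P →ₗ[F] P →ₗ[F] P
  bracket : P →ₗ[F] P →ₗ[F] P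

namespace Dialgebra

variable (D : Dialgebra F P)

/-- Span of the set of products `a·b`, `a ∈ A`, `b ∈ B`. -/
def pmul (A B : Submodule F P) : Submodule F P :=
  Submodule.span F (Set.image2 (fun a b => D.mul a b) (A : Set P) (B : Set P))

/-- Span of the set of brackets `[a,b]`, `a ∈ A`, `b ∈ B`. -/
def pbra (A B : Submodule F P) : Submodule F P :=
  Submodule.span F (Set.image2 (fun a b => D.bracket a b) (A : Set P) (B : Set P))

/-- `A·B + [A,B]`. -/
def psq (A B : Submodule F P) : Submodule F P := D.pmul A B ⊔ D.pbra A B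

/-- A subalgebra: a subspace closed under both products. -/
def IsSubalgebra (A : Submodule F P) : Prop := D.psq A A ≤ A

/-- An ideal of the dialgebra. -/
def IsIdeal (A : Submodule F P) : Prop :=
  D.pmul A ⊤ ≤ A ∧ D.pmul ⊤ A ≤ A ∧ D.pbra A ⊤ ≤ A ∧ D.pbra ⊤ A ≤ A

/-- `A` is an ideal of the subalgebra `U`. -/
def IsIdealIn (A U : Submodule F P) : Prop :=
  A ≤ U ∧ D.pmul A U ≤ A ∧ D.pmul U A ≤ A ∧ D.pbra A U ≤ A ∧ D.pbra U A ≤ A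

/-- Lower central series of `B`: `B^1 = B`, `B^{n+1} = B^n·B + [B^n,B]`. -/
def lcs (B : Submodule F P) : ℕ → Submodule F P
  | 0 => B
  | n + 1 => D.psq (lcs B n) B

/-- `B` is nilpotent as a dialgebra. -/
def IsNilpotentSub (B : Submodule F P) : Prop := ∃ n, D.lcs B n = ⊥

/-- Derived series of `B`. -/
def ders (B : Submodule F P) : ℕ → Submodule F P
  | 0 => B
  | n + 1 => D.psq (ders B n) (ders B n)

/-- `B` is solvable as a dialgebra. -/
def IsSolvableSub (B : Submodule F P) : Prop := ∃ n, D.ders B n = ⊥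

/-- Associative powers: `apow B n = B_A^{n+1}`, i.e. `apow B 0 = B_A^1 = B`. -/
def apow (B : Submodule F P) : ℕ → Submodule F P
  | 0 => B
  | n + 1 => D.pmul (apow B n) B

/-- Lie powers: `lpow B n = B_L^{n+1}`. -/
def lpow (B : Submodule F P) : ℕ → Submodule F P
  | 0 => B
  | n + 1 => D.pbra (lpow B n) B

/-- Associative nilpotency of `B`. -/
def AssocNilpotent (B : Submodule F P) : Prop := ∃ n, D.apow B n = ⊥

/-- Lie nilpotency of `B`. -/
def LieNilpotent (B : Submodule F P) : Prop := ∃ n, D.lpow B n = ⊥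

/-- `mulPows B X n = X·B_A^n` (with the convention that it is `X` for `n = 0`). -/
def mulPows (B X : Submodule F P) : ℕ → Submodule F P
  | 0 => X
  | n + 1 => D.pmul (mulPows B X n) B

/-- `M` is a maximal (proper) subalgebra of the subalgebra `U`. -/
def IsMaximalSubalgebraIn (U M : Submodule F P) : Prop :=
  D.IsSubalgebra M ∧ M < U ∧ ∀ K, D.IsSubalgebra K → M ≤ K → K ≤ U → K = M ∨ K = U

/-- Frattini subalgebra of the subalgebra `U`: intersection of its maximal subalgebras. -/
def frattiniIn (U : Submodule F P) : Submodule F P :=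
  U ⊓ sInf {M | D.IsMaximalSubalgebraIn U M}

/-- Frattini ideal of the subalgebra `U`: largest ideal of `U` inside `frattiniIn U`. -/
def phiIn (U : Submodule F P) : Submodule F P :=
  sSup {I | D.IsIdealIn I U ∧ I ≤ D.frattiniIn U}

/-- Frattini subalgebra of the dialgebra. -/
def frattini : Submodule F P := D.frattiniIn ⊤

/-- Frattini ideal of the dialgebra. -/
def phi : Submodule F P := sSup {I | D.IsIdeal I ∧ I ≤ D.frattini}

/-- Minimal ideal. -/
def IsMinimalIdeal (A : Submodule F P) : Prop :=
  D.IsIdeal A ∧ A ≠ ⊥ ∧ ∀ I, D.IsIdeal I → I ≤ A → I = ⊥ ∨ I = A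

/-- Zero (trivial-multiplication) subspace. -/
def IsZeroAlg (A : Submodule F P) : Prop := D.pmul A A = ⊥ ∧ D.pbra A A = ⊥

/-- Zero socle: sum of the minimal zero ideals. -/
def zsoc : Submodule F P := sSup {A | D.IsMinimalIdeal A ∧ D.IsZeroAlg A}

/-- Socle: sum of the minimal ideals. -/
def soc : Submodule F P := sSup {A | D.IsMinimalIdeal A}

/-- Annihilator of `B` in the algebra. -/
def annih (B : Submodule F P) : Submodule F P where
  carrier := {x | ∀ b ∈ B, D.mul x b = 0 ∧ D.bracket x b = 0}
  add_mem' := by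
    intro x y hx hy b hb
    have h1 := hx b hb; have h2 := hy b hb
    constructor <;> simp [map_add, LinearMap.add_apply, h1.1, h1.2, h2.1, h2.2]
  zero_mem' := by intro b hb; simp
  smul_mem' := by
    intro c x hx b hb
    have h := hx b hb
    constructor <;> simp [map_smul, LinearMap.smul_apply, h.1, h.2]

/-- `R` is the solvable radical: the largest solvable ideal. -/
def IsRadical (R : Submodule F P) : Prop :=
  D.IsIdeal R ∧ D.IsSolvableSub R ∧ ∀ I, D.IsIdeal I → D.IsSolvableSub I → I ≤ R

/-- `N` is the nilradical: the largest nilpotent ideal. -/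
def IsNilradical (N : Submodule F P) : Prop :=
  D.IsIdeal N ∧ D.IsNilpotentSub N ∧ ∀ I, D.IsIdeal I → D.IsNilpotentSub I → I ≤ N

end Dialgebra

/-- A Poisson algebra: commutative associative product and Lie bracket linked by the Leibniz rule. -/
structure PoissonAlgebra (F P : Type*) [Field F] [AddCommGroup P] [Module F P]
    extends Dialgebra F P where
  mul_comm : ∀ x y, mul x y = mul y x
  mul_assoc : ∀ x y z, mul (mul x y) z = mul x (mul y z)
  lie_self : ∀ x, bracket x x = 0
  leibniz_lie : ∀ x y z, bracket x (bracket y z) = bracket (bracket x y) z + bracket y (bracket x z)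
  leibniz : ∀ x y z, bracket (mul x y) z = mul (bracket x z) y + mul x (bracket y z)
/-! ### Auxiliary lemmas -/

namespace Dialgebra

variable {F P : Type*} [Field F] [AddCommGroup P] [Module F P] (D : Dialgebra F P)

lemma pmul_le_iff {A B C : Submodule F P} :
    D.pmul A B ≤ C ↔ ∀ a ∈ A, ∀ b ∈ B, D.mul a b ∈ C := by
  rw [pmul, Submodule.span_le, Set.image2_subset_iff]; rfl

lemma pbra_le_iff {A B C : Submodule F P} :
    D.pbra A B ≤ C ↔ ∀ a ∈ A, ∀ b ∈ B, D.bracket a b ∈ C := by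
  rw [pbra, Submodule.span_le, Set.image2_subset_iff]; rfl

lemma mul_mem_pmul {A B : Submodule F P} {a b : P} (ha : a ∈ A) (hb : b ∈ B) :
    D.mul a b ∈ D.pmul A B :=
  Submodule.subset_span (Set.mem_image2_of_mem ha hb)

lemma bracket_mem_pbra {A B : Submodule F P} {a b : P} (ha : a ∈ A) (hb : b ∈ B) :
    D.bracket a b ∈ D.pbra A B :=
  Submodule.subset_span (Set.mem_image2_of_mem ha hb)

lemma pmul_mono {A A' B B' : Submodule F P} (hA : A ≤ A') (hB : B ≤ B') :
    D.pmul A B ≤ D.pmul A' B' :=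
  Submodule.span_mono (Set.image2_subset hA hB)

lemma pbra_mono {A A' B B' : Submodule F P} (hA : A ≤ A') (hB : B ≤ B') :
    D.pbra A B ≤ D.pbra A' B' :=
  Submodule.span_mono (Set.image2_subset hA hB)

lemma psq_le_iff {A B C : Submodule F P} :
    D.psq A B ≤ C ↔ D.pmul A B ≤ C ∧ D.pbra A B ≤ C := sup_le_iff

lemma psq_mono {A A' B B' : Submodule F P} (hA : A ≤ A') (hB : B ≤ B') :
    D.psq A B ≤ D.psq A' B' :=
  sup_le_sup (D.pmul_mono hA hB) (D.pbra_mono hA hB)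

lemma IsIdeal.mul_right {A : Submodule F P} (h : D.IsIdeal A) {a : P} (ha : a ∈ A) (p : P) :
    D.mul a p ∈ A := h.1 (D.mul_mem_pmul ha Submodule.mem_top)

lemma IsIdeal.mul_left {A : Submodule F P} (h : D.IsIdeal A) {a : P} (ha : a ∈ A) (p : P) :
    D.mul p a ∈ A := h.2.1 (D.mul_mem_pmul Submodule.mem_top ha)

lemma IsIdeal.bra_right {A : Submodule F P} (h : D.IsIdeal A) {a : P} (ha : a ∈ A) (p : P) :
    D.bracket a p ∈ A := h.2.2.1 (D.bracket_mem_pbra ha Submodule.mem_top)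

lemma IsIdeal.bra_left {A : Submodule F P} (h : D.IsIdeal A) {a : P} (ha : a ∈ A) (p : P) :
    D.bracket p a ∈ A := h.2.2.2 (D.bracket_mem_pbra Submodule.mem_top ha)

lemma IsIdeal.inf {A B : Submodule F P} (hA : D.IsIdeal A) (hB : D.IsIdeal B) :
    D.IsIdeal (A ⊓ B) :=
  ⟨le_inf ((D.pmul_mono inf_le_left le_rfl).trans hA.1)
      ((D.pmul_mono inf_le_right le_rfl).trans hB.1),
   le_inf ((D.pmul_mono le_rfl inf_le_left).trans hA.2.1)
      ((D.pmul_mono le_rfl inf_le_right).trans hB.2.1),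
   le_inf ((D.pbra_mono inf_le_left le_rfl).trans hA.2.2.1)
      ((D.pbra_mono inf_le_right le_rfl).trans hB.2.2.1),
   le_inf ((D.pbra_mono le_rfl inf_le_left).trans hA.2.2.2)
      ((D.pbra_mono le_rfl inf_le_right).trans hB.2.2.2)⟩

/-- Products of two ideals land in their intersection. -/
lemma pmul_le_inf {A B : Submodule F P} (hA : D.IsIdeal A) (hB : D.IsIdeal B) :
    D.pmul A B ≤ A ⊓ B :=
  le_inf ((D.pmul_mono le_rfl le_top).trans hA.1) ((D.pmul_mono le_top le_rfl).trans hB.2.1)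

lemma pbra_le_inf {A B : Submodule F P} (hA : D.IsIdeal A) (hB : D.IsIdeal B) :
    D.pbra A B ≤ A ⊓ B :=
  le_inf ((D.pbra_mono le_rfl le_top).trans hA.2.2.1)
    ((D.pbra_mono le_top le_rfl).trans hB.2.2.2)

/-- Distinct minimal ideals intersect trivially. -/
lemma minimal_inf_bot {S T : Submodule F P} (hS : D.IsMinimalIdeal S)
    (hT : D.IsMinimalIdeal T) (hne : S ≠ T) : S ⊓ T = ⊥ := by
  rcases hS.2.2 _ (IsIdeal.inf D hS.1 hT.1) inf_le_left with h | h
  · exact h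
  · rcases hT.2.2 _ (IsIdeal.inf D hS.1 hT.1) inf_le_right with h' | h'
    · exact h'
    · exact absurd (h.symm.trans h') hne

end Dialgebra
namespace PoissonAlgebra

variable {F P : Type*} [Field F] [AddCommGroup P] [Module F P] (Q : PoissonAlgebra F P)

lemma bracket_antisymm (x y : P) : Q.bracket x y = - Q.bracket y x := by
  have h := Q.lie_self (x + y)
  simp only [map_add, LinearMap.add_apply, Q.lie_self x, Q.lie_self y, zero_add,
    add_zero] at h
  exact eq_neg_of_add_eq_zero_right h

lemma pmul_comm (A B : Submodule F P) :
    Q.toDialgebra.pmul A B = Q.toDialgebra.pmul B A := by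
  apply le_antisymm <;>
  · rw [Dialgebra.pmul_le_iff]
    intro a ha b hb
    rw [Q.mul_comm]
    exact Q.toDialgebra.mul_mem_pmul hb ha

lemma pbra_comm (A B : Submodule F P) :
    Q.toDialgebra.pbra A B = Q.toDialgebra.pbra B A := by
  apply le_antisymm <;>
  · rw [Dialgebra.pbra_le_iff]
    intro a ha b hb
    rw [Q.bracket_antisymm]
    exact neg_mem (Q.toDialgebra.bracket_mem_pbra hb ha)

lemma psq_comm (A B : Submodule F P) :
    Q.toDialgebra.psq A B = Q.toDialgebra.psq B A := by
  rw [Dialgebra.psq, Dialgebra.psq, Q.pmul_comm, Q.pbra_comm]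

/-- The elements whose products with everything in `B` lie in `C`. -/
def cond (B C : Submodule F P) : Submodule F P where
  carrier := {x | ∀ b ∈ B, Q.mul x b ∈ C ∧ Q.bracket x b ∈ C}
  add_mem' := by
    intro x y hx hy b hb
    have h1 := hx b hb; have h2 := hy b hb
    constructor <;> simp only [map_add, LinearMap.add_apply] <;>
      exact add_mem (by tauto) (by tauto)
  zero_mem' := by intro b hb; simp
  smul_mem' := by
    intro c x hx b hb
    have h := hx b hb
    constructor <;> simp only [map_smul, LinearMap.smul_apply] <;>
      exact Submodule.smul_mem _ _ (by tauto)

lemma mem_cond {B C : Submodule F P} {x : P} :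
    x ∈ Q.cond B C ↔ ∀ b ∈ B, Q.mul x b ∈ C ∧ Q.bracket x b ∈ C := Iff.rfl

lemma le_cond_iff {A B C : Submodule F P} :
    A ≤ Q.cond B C ↔ Q.toDialgebra.pmul A B ≤ C ∧ Q.toDialgebra.pbra A B ≤ C := by
  rw [Dialgebra.pmul_le_iff, Dialgebra.pbra_le_iff]
  constructor
  · exact fun h => ⟨fun a ha b hb => (h ha b hb).1, fun a ha b hb => (h ha b hb).2⟩
  · exact fun h a ha b hb => ⟨h.1 a ha b hb, h.2 a ha b hb⟩

lemma cond_mono_right {B C C' : Submodule F P} (h : C ≤ C') : Q.cond B C ≤ Q.cond B C' :=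
  fun _ hx b hb => ⟨h (hx b hb).1, h (hx b hb).2⟩

/-- Flip an annihilation condition using commutativity/antisymmetry. -/
lemma cond_bot_flip {A B : Submodule F P} (h : A ≤ Q.cond B ⊥) : B ≤ Q.cond A ⊥ := by
  rw [le_cond_iff] at h ⊢
  rw [Q.pmul_comm, Q.pbra_comm]
  exact h

lemma isIdeal_iff_le_cond {A : Submodule F P} :
    Q.toDialgebra.IsIdeal A ↔ A ≤ Q.cond ⊤ A := by
  rw [le_cond_iff]
  constructor
  · exact fun h => ⟨h.1, h.2.2.1⟩
  · intro h
    exact ⟨h.1, (Q.pmul_comm ⊤ A).le.trans h.1, h.2, (Q.pbra_comm ⊤ A).le.trans h.2⟩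

lemma isIdeal_sSup {S : Set (Submodule F P)} (h : ∀ A ∈ S, Q.toDialgebra.IsIdeal A) :
    Q.toDialgebra.IsIdeal (sSup S) := by
  rw [isIdeal_iff_le_cond]
  exact sSup_le fun A hA => ((Q.isIdeal_iff_le_cond).mp (h A hA)).trans
    (Q.cond_mono_right (le_sSup hA))

lemma annih_eq_cond (B : Submodule F P) : Q.toDialgebra.annih B = Q.cond B ⊥ := by
  ext x
  simp [Dialgebra.annih, mem_cond, Submodule.mem_bot]

/-- `[x,y]·z = [x·z, y] - x·[z,y]`. -/
lemma mul_bracket (x y z : P) :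
    Q.mul (Q.bracket x y) z = Q.bracket (Q.mul x z) y - Q.mul x (Q.bracket z y) := by
  rw [Q.leibniz x z y]; abel

/-- `[[x,y],z] = [x,[y,z]] - [y,[x,z]]`. -/
lemma bracket_bracket (x y z : P) :
    Q.bracket (Q.bracket x y) z =
      Q.bracket x (Q.bracket y z) - Q.bracket y (Q.bracket x z) := by
  rw [Q.leibniz_lie x y z]; abel

lemma soc_isIdeal : Q.toDialgebra.IsIdeal Q.toDialgebra.soc :=
  Q.isIdeal_sSup fun _ hA => hA.1

lemma zsoc_isIdeal : Q.toDialgebra.IsIdeal Q.toDialgebra.zsoc :=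
  Q.isIdeal_sSup fun _ hA => hA.1.1

lemma zsoc_le_soc : Q.toDialgebra.zsoc ≤ Q.toDialgebra.soc :=
  sSup_le_sSup fun _ hA => hA.1

end PoissonAlgebra
namespace Dialgebra

variable {F P : Type*} [Field F] [AddCommGroup P] [Module F P] (D : Dialgebra F P)

lemma mem_annih {B : Submodule F P} {x : P} :
    x ∈ D.annih B ↔ ∀ b ∈ B, D.mul x b = 0 ∧ D.bracket x b = 0 := Iff.rfl

lemma mul_mem_psq {A B : Submodule F P} {a b : P} (ha : a ∈ A) (hb : b ∈ B) :
    D.mul a b ∈ D.psq A B := Submodule.mem_sup_left (D.mul_mem_pmul ha hb)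

lemma bracket_mem_psq {A B : Submodule F P} {a b : P} (ha : a ∈ A) (hb : b ∈ B) :
    D.bracket a b ∈ D.psq A B := Submodule.mem_sup_right (D.bracket_mem_pbra ha hb)

lemma isSubalg_top : D.IsSubalgebra (⊤ : Submodule F P) := le_top

lemma isSubalg_inf {A B : Submodule F P} (hA : D.IsSubalgebra A) (hB : D.IsSubalgebra B) :
    D.IsSubalgebra (A ⊓ B) :=
  le_inf ((D.psq_mono inf_le_left inf_le_left).trans hA)
    ((D.psq_mono inf_le_right inf_le_right).trans hB)

end Dialgebra

namespace PoissonAlgebra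

variable {F P : Type*} [Field F] [AddCommGroup P] [Module F P] (Q : PoissonAlgebra F P)

lemma zsoc_ann_soc : Q.toDialgebra.zsoc ≤ Q.cond Q.toDialgebra.soc ⊥ := by
  apply Q.cond_bot_flip
  refine sSup_le fun T hT => ?_
  apply Q.cond_bot_flip
  refine sSup_le fun S hS => ?_
  rw [Q.le_cond_iff]
  by_cases h : S = T
  · subst h
    exact ⟨hS.2.1.le, hS.2.2.le⟩
  · have hbot := Q.toDialgebra.minimal_inf_bot hS.1 hT h
    exact ⟨(Q.toDialgebra.pmul_le_inf hS.1.1 hT.1).trans hbot.le,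
      (Q.toDialgebra.pbra_le_inf hS.1.1 hT.1).trans hbot.le⟩

lemma zsoc_psq_bot : Q.toDialgebra.psq Q.toDialgebra.zsoc Q.toDialgebra.zsoc = ⊥ := by
  have h := (Q.le_cond_iff.mp Q.zsoc_ann_soc)
  refine le_bot_iff.mp (sup_le ?_ ?_)
  · exact (Q.toDialgebra.pmul_mono le_rfl Q.zsoc_le_soc).trans h.1
  · exact (Q.toDialgebra.pbra_mono le_rfl Q.zsoc_le_soc).trans h.2

lemma zsoc_le_annih_soc : Q.toDialgebra.zsoc ≤ Q.toDialgebra.annih Q.toDialgebra.soc := by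
  rw [Q.annih_eq_cond]
  exact Q.zsoc_ann_soc

/-- The nilradical annihilates every minimal ideal. -/
lemma psq_nilradical_minimal {N S : Submodule F P} (hN : Q.toDialgebra.IsNilradical N)
    (hS : Q.toDialgebra.IsMinimalIdeal S) : Q.toDialgebra.psq N S = ⊥ := by
  have hKS : Q.toDialgebra.psq N S ≤ S :=
    sup_le ((Q.toDialgebra.pmul_mono le_top le_rfl).trans hS.1.2.1)
      ((Q.toDialgebra.pbra_mono le_top le_rfl).trans hS.1.2.2.2)
  have hKN : Q.toDialgebra.psq N S ≤ N :=
    sup_le ((Q.toDialgebra.pmul_mono le_rfl le_top).trans hN.1.1)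
      ((Q.toDialgebra.pbra_mono le_rfl le_top).trans hN.1.2.2.1)
  have hKideal : Q.toDialgebra.IsIdeal (Q.toDialgebra.psq N S) := by
    rw [Q.isIdeal_iff_le_cond]
    refine sup_le ?_ ?_
    · rw [Dialgebra.pmul_le_iff]
      intro n hn s hs
      rw [Q.mem_cond]
      intro p _
      constructor
      · rw [Q.mul_assoc]
        exact Q.toDialgebra.mul_mem_psq hn (Dialgebra.IsIdeal.mul_right _ hS.1 hs p)
      · rw [Q.leibniz n s p]
        exact add_mem
          (Q.toDialgebra.mul_mem_psq (Dialgebra.IsIdeal.bra_right _ hN.1 hn p) hs)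
          (Q.toDialgebra.mul_mem_psq hn (Dialgebra.IsIdeal.bra_right _ hS.1 hs p))
    · rw [Dialgebra.pbra_le_iff]
      intro n hn s hs
      rw [Q.mem_cond]
      intro p _
      constructor
      · rw [Q.mul_bracket n s p]
        exact sub_mem
          (Q.toDialgebra.bracket_mem_psq (Dialgebra.IsIdeal.mul_right _ hN.1 hn p) hs)
          (Q.toDialgebra.mul_mem_psq hn (Dialgebra.IsIdeal.bra_left _ hS.1 hs p))
      · rw [Q.bracket_bracket n s p]
        refine sub_mem
          (Q.toDialgebra.bracket_mem_psq hn (Dialgebra.IsIdeal.bra_right _ hS.1 hs p)) ?_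
        rw [Q.bracket_antisymm s (Q.bracket n p)]
        exact neg_mem
          (Q.toDialgebra.bracket_mem_psq (Dialgebra.IsIdeal.bra_right _ hN.1 hn p) hs)
  rcases hS.2.2 _ hKideal hKS with h | h
  · exact h
  · exfalso
    have hSN : S ≤ N := h ▸ hKN
    have hlcs : ∀ k, S ≤ Q.toDialgebra.lcs N k := by
      intro k
      induction k with
      | zero => exact hSN
      | succ k ih =>
        calc S = Q.toDialgebra.psq N S := h.symm
          _ = Q.toDialgebra.psq S N := Q.psq_comm N S
          _ ≤ Q.toDialgebra.psq (Q.toDialgebra.lcs N k) N := Q.toDialgebra.psq_mono ih le_rfl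
          _ = Q.toDialgebra.lcs N (k + 1) := rfl
    obtain ⟨n, hn⟩ := hN.2.1
    exact hS.2.1 (le_bot_iff.mp (hn ▸ hlcs n))

lemma nilradical_le_annih_soc {N : Submodule F P} (hN : Q.toDialgebra.IsNilradical N) :
    N ≤ Q.toDialgebra.annih Q.toDialgebra.soc := by
  rw [Q.annih_eq_cond]
  apply Q.cond_bot_flip
  refine sSup_le fun S hS => ?_
  apply Q.cond_bot_flip
  rw [Q.le_cond_iff]
  have h := Q.psq_nilradical_minimal hN hS
  exact ⟨le_sup_left.trans h.le, le_sup_right.trans h.le⟩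

lemma annih_soc_isIdeal : Q.toDialgebra.IsIdeal (Q.toDialgebra.annih Q.toDialgebra.soc) := by
  have hsoc := Q.soc_isIdeal
  rw [Q.isIdeal_iff_le_cond]
  intro x hx
  rw [Q.mem_cond]
  intro p _
  rw [Dialgebra.mem_annih] at hx
  constructor
  · rw [Dialgebra.mem_annih]
    intro b hb
    constructor
    · rw [Q.mul_assoc]
      exact (hx _ (Dialgebra.IsIdeal.mul_left _ hsoc hb p)).1
    · rw [Q.leibniz x p b, (hx b hb).2, (hx _ (Dialgebra.IsIdeal.bra_left _ hsoc hb p)).1]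
      simp
  · rw [Dialgebra.mem_annih]
    intro b hb
    constructor
    · rw [Q.mul_bracket x p b, (hx b hb).1, (hx _ (Dialgebra.IsIdeal.bra_right _ hsoc hb p)).1]
      simp
    · rw [Q.bracket_bracket x p b, (hx _ (Dialgebra.IsIdeal.bra_left _ hsoc hb p)).2,
        (hx b hb).2]
      simp

end PoissonAlgebra
namespace PoissonAlgebra

variable {F P : Type*} [Field F] [AddCommGroup P] [Module F P] (Q : PoissonAlgebra F P)

/-- In a `φ`-free algebra every nonzero ideal avoids some maximal subalgebra. -/
lemma exists_maximal_not_le (hphi : Q.toDialgebra.phi = ⊥) {I : Submodule F P}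
    (hI : Q.toDialgebra.IsIdeal I) (hne : I ≠ ⊥) :
    ∃ M, Q.toDialgebra.IsMaximalSubalgebraIn ⊤ M ∧ ¬ I ≤ M := by
  by_contra h
  push_neg at h
  have hfr : I ≤ Q.toDialgebra.frattini := by
    rw [Dialgebra.frattini, Dialgebra.frattiniIn]
    exact le_inf le_top (le_sInf fun M hM => h M hM)
  have hphi' : I ≤ Q.toDialgebra.phi := le_sSup ⟨hI, hfr⟩
  rw [hphi] at hphi'
  exact hne (le_bot_iff.mp hphi')

lemma isSubalg_ideal_sup {A M : Submodule F P} (hA : Q.toDialgebra.IsIdeal A)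
    (hM : Q.toDialgebra.IsSubalgebra M) : Q.toDialgebra.IsSubalgebra (A ⊔ M) := by
  have hMM : Q.toDialgebra.pmul M M ≤ M := le_sup_left.trans hM
  have hMB : Q.toDialgebra.pbra M M ≤ M := le_sup_right.trans hM
  refine sup_le ?_ ?_
  · rw [Dialgebra.pmul_le_iff]
    intro a ha b hb
    rcases Submodule.mem_sup.mp ha with ⟨a1, h1, a2, h2, rfl⟩
    rcases Submodule.mem_sup.mp hb with ⟨b1, k1, b2, k2, rfl⟩
    simp only [map_add, LinearMap.add_apply]
    exact add_mem
      (add_mem (Submodule.mem_sup_left (Dialgebra.IsIdeal.mul_right _ hA h1 b1))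
        (Submodule.mem_sup_left (Dialgebra.IsIdeal.mul_left _ hA k1 a2)))
      (add_mem (Submodule.mem_sup_left (Dialgebra.IsIdeal.mul_right _ hA h1 b2))
        (Submodule.mem_sup_right (hMM (Q.toDialgebra.mul_mem_pmul h2 k2))))
  · rw [Dialgebra.pbra_le_iff]
    intro a ha b hb
    rcases Submodule.mem_sup.mp ha with ⟨a1, h1, a2, h2, rfl⟩
    rcases Submodule.mem_sup.mp hb with ⟨b1, k1, b2, k2, rfl⟩
    simp only [map_add, LinearMap.add_apply]
    exact add_mem
      (add_mem (Submodule.mem_sup_left (Dialgebra.IsIdeal.bra_right _ hA h1 b1))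
        (Submodule.mem_sup_left (Dialgebra.IsIdeal.bra_left _ hA k1 a2)))
      (add_mem (Submodule.mem_sup_left (Dialgebra.IsIdeal.bra_right _ hA h1 b2))
        (Submodule.mem_sup_right (hMB (Q.toDialgebra.bracket_mem_pbra h2 k2))))

/-- A zero ideal in a `φ`-free finite-dimensional algebra has a subalgebra complement. -/
lemma exists_complement [FiniteDimensional F P] (hphi : Q.toDialgebra.phi = ⊥)
    {Z : Submodule F P} (hZI : Q.toDialgebra.IsIdeal Z)
    (hZ0 : Q.toDialgebra.psq Z Z = ⊥) :
    ∃ C, Q.toDialgebra.IsSubalgebra C ∧ Z ⊔ C = ⊤ ∧ Z ⊓ C = ⊥ := by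
  set s : Set ℕ := {n | ∃ C : Submodule F P,
    Q.toDialgebra.IsSubalgebra C ∧ Z ⊔ C = ⊤ ∧ Module.finrank F C = n} with hs
  have hne : s.Nonempty :=
    ⟨Module.finrank F (⊤ : Submodule F P), ⊤, Q.toDialgebra.isSubalg_top, sup_top_eq Z, rfl⟩
  obtain ⟨C, hCsub, hCtop, hCrank⟩ := Nat.sInf_mem hne
  refine ⟨C, hCsub, hCtop, ?_⟩
  by_contra hD
  have hDideal : Q.toDialgebra.IsIdeal (Z ⊓ C) := by
    rw [Q.isIdeal_iff_le_cond]
    intro x hx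
    rw [Q.mem_cond]
    intro p _
    have hp : p ∈ Z ⊔ C := by rw [hCtop]; exact Submodule.mem_top
    rcases Submodule.mem_sup.mp hp with ⟨z, hz, c, hc, rfl⟩
    constructor
    · simp only [map_add]
      have h1 : Q.mul x z = 0 := by
        have := Q.toDialgebra.mul_mem_psq hx.1 hz
        rw [hZ0] at this
        exact (Submodule.mem_bot F).mp this
      rw [h1, zero_add]
      exact ⟨Dialgebra.IsIdeal.mul_right _ hZI hx.1 c,
        (le_sup_left.trans hCsub) (Q.toDialgebra.mul_mem_pmul hx.2 hc)⟩
    · simp only [map_add]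
      have h1 : Q.bracket x z = 0 := by
        have := Q.toDialgebra.bracket_mem_psq hx.1 hz
        rw [hZ0] at this
        exact (Submodule.mem_bot F).mp this
      rw [h1, zero_add]
      exact ⟨Dialgebra.IsIdeal.bra_right _ hZI hx.1 c,
        (le_sup_right.trans hCsub) (Q.toDialgebra.bracket_mem_pbra hx.2 hc)⟩
  obtain ⟨M, hMmax, hDM⟩ := Q.exists_maximal_not_le hphi hDideal hD
  have hKsub : Q.toDialgebra.IsSubalgebra ((Z ⊓ C) ⊔ M) := Q.isSubalg_ideal_sup hDideal hMmax.1
  have hKtop : (Z ⊓ C) ⊔ M = ⊤ := by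
    rcases hMmax.2.2 _ hKsub le_sup_right le_top with h | h
    · exact absurd (le_sup_left.trans h.le) hDM
    · exact h
  have hC : C = (Z ⊓ C) ⊔ (M ⊓ C) := by
    have hmod : ((Z ⊓ C) ⊔ M) ⊓ C = (Z ⊓ C) ⊔ (M ⊓ C) := sup_inf_assoc_of_le M inf_le_right
    rw [← hmod, hKtop, top_inf_eq]
  have hnewtop : Z ⊔ (M ⊓ C) = ⊤ := by
    have h2 : Z ⊔ C = Z ⊔ (M ⊓ C) := by
      conv_lhs => rw [hC]
      rw [← sup_assoc, sup_inf_self]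
    rw [← h2, hCtop]
  have hMC : Module.finrank F ↥(M ⊓ C) ∈ s :=
    ⟨M ⊓ C, Q.toDialgebra.isSubalg_inf hMmax.1 hCsub, hnewtop, rfl⟩
  have hle := Nat.sInf_le hMC
  rw [← hCrank] at hle
  have hMCeq : M ⊓ C = C := Submodule.eq_of_le_of_finrank_le inf_le_right hle
  have hCM : C ≤ M := by rw [← hMCeq]; exact inf_le_left
  exact hDM (inf_le_right.trans hCM)

/-- Every nonzero ideal of a finite-dimensional algebra contains a minimal ideal. -/
lemma exists_minimal_ideal_le [FiniteDimensional F P] {E : Submodule F P}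
    (hE : Q.toDialgebra.IsIdeal E) (hne : E ≠ ⊥) :
    ∃ S, Q.toDialgebra.IsMinimalIdeal S ∧ S ≤ E := by
  set s : Set ℕ := {n | ∃ S : Submodule F P,
    Q.toDialgebra.IsIdeal S ∧ S ≠ ⊥ ∧ S ≤ E ∧ Module.finrank F S = n} with hs
  have hone : s.Nonempty := ⟨Module.finrank F E, E, hE, hne, le_rfl, rfl⟩
  obtain ⟨S, hSI, hSne, hSE, hSrank⟩ := Nat.sInf_mem hone
  refine ⟨S, ⟨hSI, hSne, ?_⟩, hSE⟩
  intro I hI hIS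
  by_cases h : I = ⊥
  · exact Or.inl h
  · right
    have hle : sInf s ≤ Module.finrank F I := Nat.sInf_le ⟨I, hI, h, hIS.trans hSE, rfl⟩
    rw [← hSrank] at hle
    exact Submodule.eq_of_le_of_finrank_le hIS hle

end PoissonAlgebra
/-- In a `φ`-free Poisson algebra, `Zsoc(P) = N(P) = Ann_P(Soc(P))`. -/
theorem zsoc_eq_nilradical_eq_ann_soc {F P : Type*} [Field F] [AddCommGroup P] [Module F P]
    [FiniteDimensional F P] (Q : PoissonAlgebra F P) (N : Submodule F P)
    (hN : Q.toDialgebra.IsNilradical N) (hphi : Q.toDialgebra.phi = ⊥) :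
    Q.toDialgebra.zsoc = N ∧ N = Q.toDialgebra.annih Q.toDialgebra.soc := by
  -- Abbreviations
  have hZN : Q.toDialgebra.zsoc ≤ N := by
    refine sSup_le fun S hS => hN.2.2 S hS.1.1 ⟨1, ?_⟩
    show Q.toDialgebra.psq S S = ⊥
    rw [Dialgebra.psq, hS.2.1, hS.2.2, bot_sup_eq]
  have hNA : N ≤ Q.toDialgebra.annih Q.toDialgebra.soc := Q.nilradical_le_annih_soc hN
  have hZA : Q.toDialgebra.zsoc ≤ Q.toDialgebra.annih Q.toDialgebra.soc :=
    Q.zsoc_le_annih_soc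
  obtain ⟨C, hCsub, hCtop, hCbot⟩ := Q.exists_complement hphi Q.zsoc_isIdeal Q.zsoc_psq_bot
  -- `annih soc ⊓ C` is an ideal of `P`
  have hEideal : Q.toDialgebra.IsIdeal (Q.toDialgebra.annih Q.toDialgebra.soc ⊓ C) := by
    rw [Q.isIdeal_iff_le_cond]
    intro x hx
    rw [Q.mem_cond]
    intro p _
    have hp : p ∈ Q.toDialgebra.zsoc ⊔ C := by rw [hCtop]; exact Submodule.mem_top
    rcases Submodule.mem_sup.mp hp with ⟨z, hz, c, hc, rfl⟩
    have hxA := (Dialgebra.mem_annih _).mp hx.1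
    have hzs : z ∈ Q.toDialgebra.soc := Q.zsoc_le_soc hz
    constructor
    · simp only [map_add]
      rw [(hxA z hzs).1, zero_add]
      exact ⟨Dialgebra.IsIdeal.mul_right _ Q.annih_soc_isIdeal hx.1 c,
        (le_sup_left.trans hCsub) (Q.toDialgebra.mul_mem_pmul hx.2 hc)⟩
    · simp only [map_add]
      rw [(hxA z hzs).2, zero_add]
      exact ⟨Dialgebra.IsIdeal.bra_right _ Q.annih_soc_isIdeal hx.1 c,
        (le_sup_right.trans hCsub) (Q.toDialgebra.bracket_mem_pbra hx.2 hc)⟩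
  -- that ideal is trivial
  have hEbot : Q.toDialgebra.annih Q.toDialgebra.soc ⊓ C = ⊥ := by
    by_contra hE
    obtain ⟨S, hSmin, hSE⟩ := Q.exists_minimal_ideal_le hEideal hE
    have hSsoc : S ≤ Q.toDialgebra.soc := le_sSup hSmin
    have hSA : S ≤ Q.toDialgebra.annih Q.toDialgebra.soc := hSE.trans inf_le_left
    have hSzero : Q.toDialgebra.IsZeroAlg S := by
      constructor
      · refine eq_bot_iff.mpr ?_
        rw [Dialgebra.pmul_le_iff]
        intro a ha b hb
        exact (Submodule.mem_bot F).mpr (((Dialgebra.mem_annih _).mp (hSA ha) b (hSsoc hb)).1)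
      · refine eq_bot_iff.mpr ?_
        rw [Dialgebra.pbra_le_iff]
        intro a ha b hb
        exact (Submodule.mem_bot F).mpr (((Dialgebra.mem_annih _).mp (hSA ha) b (hSsoc hb)).2)
    have hSZ : S ≤ Q.toDialgebra.zsoc := le_sSup ⟨hSmin, hSzero⟩
    have hSbot : S ≤ ⊥ := by
      rw [← hCbot]
      exact le_inf hSZ (hSE.trans inf_le_right)
    exact hSmin.2.1 (le_bot_iff.mp hSbot)
  -- conclude `annih soc = zsoc`
  have hAZ : Q.toDialgebra.annih Q.toDialgebra.soc = Q.toDialgebra.zsoc := by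
    have hmod : (Q.toDialgebra.zsoc ⊔ C) ⊓ Q.toDialgebra.annih Q.toDialgebra.soc =
        Q.toDialgebra.zsoc ⊔ (C ⊓ Q.toDialgebra.annih Q.toDialgebra.soc) :=
      sup_inf_assoc_of_le C hZA
    rw [hCtop, top_inf_eq] at hmod
    rw [hmod, inf_comm C (Q.toDialgebra.annih Q.toDialgebra.soc), hEbot, sup_bot_eq]
  exact ⟨le_antisymm hZN (hNA.trans hAZ.le), le_antisymm hNA (hAZ.le.trans hZN)⟩
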